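/- For λ ∈ (0,1], the logarithmic coefficients of f_λ(z) = z/((1−z)(1−λz)(1+(λ/(1+λ))z)) are γ_n(f_λ) = (1/2)·((1+λ^n)/n + (−1)^n·λ^n/(n(1+λ)^n)), and for every even n ≥ 2 one has γ_n(f_λ) > (1+λ^n)/(2n). -/

import Mathlib

open Complex Real

theorem stmt_10 (lam : ℝ) (hl0 : 0 < lam) (hl1 : lam ≤ 1)
    (γ : ℕ → ℝ)
    (hγ : ∀ n : ℕ, 1 ≤ n →
      γ n = (1 / 2) * ((1 + lam ^ n) / n + (-1) ^ n * lam ^ n / (n * (1 + lam) ^ n))) :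
    (∃ r > (0 : ℝ), ∀ z : ℂ, ‖z‖ < r → z ≠ 0 →
      Complex.log ((z / ((1 - z) * (1 - (lam : ℂ) * z) * (1 + ((lam / (1 + lam) : ℝ) : ℂ) * z))) / z)
        = 2 * ∑' n : ℕ, ((γ (n + 1) : ℝ) : ℂ) * z ^ (n + 1)) ∧
    (∀ n : ℕ, 2 ≤ n → Even n → γ n > (1 + lam ^ n) / (2 * n)) := by
  have h1l : (0:ℝ) < 1 + lam := by linarith
  have hμ0 : 0 ≤ lam / (1 + lam) := by positivity
  have hμ1 : lam / (1 + lam) ≤ 1 := by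
    rw [div_le_one h1l]; linarith
  constructor
  · refine ⟨1/2, by norm_num, fun z hz hz0 => ?_⟩
    set μ : ℝ := lam / (1 + lam) with hμ
    set a : ℂ := 1 - z with ha
    set b : ℂ := 1 - (lam:ℂ) * z with hb
    set c : ℂ := 1 + (μ:ℂ) * z with hc
    have hlamz : ‖(lam:ℂ) * z‖ ≤ ‖z‖ := by
      rw [norm_mul, Complex.norm_real]
      calc |lam| * ‖z‖ ≤ 1 * ‖z‖ := by
            apply mul_le_mul_of_nonneg_right _ (norm_nonneg z)
            rw [abs_of_pos hl0]; exact hl1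
        _ = ‖z‖ := one_mul _
    have hμz : ‖(μ:ℂ) * z‖ ≤ ‖z‖ := by
      rw [norm_mul, Complex.norm_real]
      calc |μ| * ‖z‖ ≤ 1 * ‖z‖ := by
            apply mul_le_mul_of_nonneg_right _ (norm_nonneg z)
            rw [_root_.abs_of_nonneg hμ0]; exact hμ1
        _ = ‖z‖ := one_mul _
    have hz1 : ‖z‖ < 1 := lt_trans hz (by norm_num)
    have hlamz1 : ‖(lam:ℂ) * z‖ < 1 := lt_of_le_of_lt hlamz hz1
    have hμz1 : ‖(μ:ℂ) * z‖ < 1 := lt_of_le_of_lt hμz hz1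
    have hμz1' : ‖-((μ:ℂ) * z)‖ < 1 := by rwa [norm_neg]
    -- nonvanishing of factors
    have hane : a ≠ 0 := by
      intro h
      have : ‖(1:ℂ)‖ ≤ ‖z‖ := by
        calc ‖(1:ℂ)‖ = ‖a + z‖ := by rw [ha]; ring_nf
          _ ≤ ‖a‖ + ‖z‖ := norm_add_le _ _
          _ = ‖z‖ := by rw [h]; simp
      rw [norm_one] at this; linarith
    have hbne : b ≠ 0 := by
      intro h
      have : ‖(1:ℂ)‖ ≤ ‖(lam:ℂ) * z‖ := by
        calc ‖(1:ℂ)‖ = ‖b + (lam:ℂ)*z‖ := by rw [hb]; ring_nf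
          _ ≤ ‖b‖ + ‖(lam:ℂ)*z‖ := norm_add_le _ _
          _ = ‖(lam:ℂ)*z‖ := by rw [h]; simp
      rw [norm_one] at this; linarith
    have hcne : c ≠ 0 := by
      intro h
      have : ‖(1:ℂ)‖ ≤ ‖(μ:ℂ) * z‖ := by
        calc ‖(1:ℂ)‖ = ‖c - (μ:ℂ)*z‖ := by rw [hc]; ring_nf
          _ ≤ ‖c‖ + ‖(μ:ℂ)*z‖ := norm_sub_le _ _
          _ = ‖(μ:ℂ)*z‖ := by rw [h]; simp
      rw [norm_one] at this; linarith
    set S : ℂ := -Complex.log a - Complex.log b - Complex.log c with hS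
    -- the series sums to S
    have H1 := Complex.hasSum_taylorSeries_neg_log (z := z) hz1
    have H2 := Complex.hasSum_taylorSeries_neg_log (z := (lam:ℂ) * z) hlamz1
    have H3 := Complex.hasSum_taylorSeries_neg_log (z := -((μ:ℂ) * z)) hμz1'
    rw [sub_neg_eq_add] at H3
    set f : ℕ → ℂ := fun n => z ^ n / n + ((lam:ℂ)*z) ^ n / n + (-((μ:ℂ)*z)) ^ n / n with hf
    have Hsum : HasSum f S := by
      have := (H1.add H2).add H3
      convert this using 1
      rw [hS, ha, hb, hc]; ring
    have Hshift : HasSum (fun n : ℕ => f (n+1)) S := by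
      refine (hasSum_nat_add_iff 1).mpr ?_
      have h0 : S + ∑ i ∈ Finset.range 1, f i = S := by
        simp [hf]
      rw [h0]; exact Hsum
    have Hγ : HasSum (fun n : ℕ => ((γ (n + 1) : ℝ) : ℂ) * z ^ (n + 1)) (S / 2) := by
      have := Hshift.div_const 2
      convert this using 2 with n
      · rfl
      rw [hf, hγ (n+1) (by omega)]
      have hn1 : ((n:ℂ) + 1) ≠ 0 := by
        exact_mod_cast (Nat.cast_add_one_ne_zero n : ((n:ℂ) + 1) ≠ 0)
      have h1lC : ((1:ℂ) + lam) ≠ 0 := by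
        intro h
        have : (1:ℝ) + lam = 0 := by exact_mod_cast h
        linarith
      have hμC : ((μ:ℝ) : ℂ) = (lam:ℂ) / (1 + (lam:ℂ)) := by
        rw [hμ]; push_cast; ring
      rw [hμC]
      push_cast
      field_simp
      have h2 : ((1:ℂ) + lam)⁻¹ ^ n * ((1:ℂ) + lam) ^ n = 1 := by
        rw [← mul_pow, inv_mul_cancel₀ h1lC, one_pow]
      linear_combination ((lam:ℂ) * (lam:ℂ) ^ n * z * z ^ n * (-1) ^ n * (((1:ℂ) + lam)⁻¹ ^ n * ((1:ℂ) + lam) ^ n)) * (inv_mul_cancel₀ h1lC) + ((lam:ℂ) * (lam:ℂ) ^ n * z * z ^ n * (-1) ^ n) * h2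
    rw [Hγ.tsum_eq]
    -- exp S = (a*b*c)⁻¹
    have hexp : Complex.exp S = a⁻¹ * b⁻¹ * c⁻¹ := by
      have hS' : S = -Complex.log a + -Complex.log b + -Complex.log c := by
        rw [hS]; ring
      rw [hS', Complex.exp_add, Complex.exp_add, Complex.exp_neg, Complex.exp_neg,
        Complex.exp_neg, Complex.exp_log hane, Complex.exp_log hbne, Complex.exp_log hcne]
    have hdiv : (z / (a * b * c)) / z = Complex.exp S := by
      rw [hexp]
      field_simp
    -- bound on the imaginary part of S
    have him : |S.im| < π := by
      have key : ∀ w : ℂ, ‖w‖ ≤ 1/2 → |(Complex.log (1 + w)).im| ≤ 3/4 := by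
        intro w hw
        calc |(Complex.log (1 + w)).im| ≤ ‖Complex.log (1 + w)‖ := Complex.abs_im_le_norm _
          _ ≤ (3/2) * ‖w‖ := Complex.norm_log_one_add_half_le_self hw
          _ ≤ (3/2) * (1/2) := by
              apply mul_le_mul_of_nonneg_left hw; norm_num
          _ = 3/4 := by norm_num
      have k1 : |(Complex.log a).im| ≤ 3/4 := by
        have := key (-z) (by rw [norm_neg]; linarith)
        simpa [ha, sub_eq_add_neg] using this
      have k2 : |(Complex.log b).im| ≤ 3/4 := by
        have := key (-((lam:ℂ)*z)) (by rw [norm_neg]; linarith)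
        simpa [hb, sub_eq_add_neg] using this
      have k3 : |(Complex.log c).im| ≤ 3/4 := by
        have := key ((μ:ℂ)*z) (by linarith)
        simpa [hc] using this
      have : |S.im| ≤ 9/4 := by
        rw [hS]
        simp only [Complex.sub_im, Complex.neg_im]
        calc |(-(Complex.log a).im - (Complex.log b).im - (Complex.log c).im)|
            ≤ |(Complex.log a).im| + |(Complex.log b).im| + |(Complex.log c).im| := by
              apply (abs_sub _ _).trans
              apply add_le_add_left
              apply (abs_sub _ _).trans
              rw [abs_neg]
          _ ≤ 9/4 := by linarith
      have hpi : (9:ℝ)/4 < π := by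
        have := Real.pi_gt_three
        linarith
      linarith
    rw [hdiv, Complex.log_exp (by cases abs_lt.mp him; linarith) (by cases abs_lt.mp him; linarith)]
    ring
  · intro n hn he
    have hnR : (0:ℝ) < n := by exact_mod_cast Nat.lt_of_lt_of_le Nat.zero_lt_two hn
    rw [hγ n (by omega), he.neg_one_pow, one_mul]
    have hpos : 0 < lam ^ n / (n * (1 + lam) ^ n) := by positivity
    have hrw : (1/2:ℝ) * ((1 + lam ^ n) / n + lam ^ n / (n * (1 + lam) ^ n))
        = (1 + lam ^ n) / (2 * n) + lam ^ n / (n * (1 + lam) ^ n) / 2 := by ring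
    rw [hrw]
    linarith
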